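/- arXiv:1112.1859 — 4 statements merged into one kernel-verified Lean document; each statement's English description precedes it below -/
import Mathlib

section
/- For r ≥ 1, the degree-r Taylor approximations of the backward flow satisfy, on the enlarged a priori supports, the estimate ẽ_{B,(r)}(h) := sup_{k∈ℤ^d} sup_{x∈Σ̃_{h,k}} ‖B̄_{(r),k}(x) − B̄(x)‖_∞ ≤ h^{r+1} (ρ̃ |F̄|₁)^{r+1} |B̄|_{r+1} / (r+1)!, where ρ̃ := ρ⁰ (1 + (hρ⁰/2) |F̄|₁² |B̄|₂). -/
open scoped NNReal
open Set

/-- Grid node `x⁰_k := h k`. -/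
noncomputable def node (d : ℕ) (h : ℝ) (k : Fin d → ℤ) : Fin d → ℝ :=
  fun i => h * (k i : ℝ)

/-- Particle shape function `φ⁰_{h,k}(x) := h^{-d} φ(h⁻¹ x - k)`. -/
noncomputable def part (d : ℕ) (h : ℝ) (φ : (Fin d → ℝ) → ℝ)
    (k : Fin d → ℤ) (x : Fin d → ℝ) : ℝ :=
  (h ^ d)⁻¹ * φ (fun i => x i / h - (k i : ℝ))

/-- Partial derivative `∂_l g`. -/
noncomputable def pd (d : ℕ) (l : Fin d) (g : (Fin d → ℝ) → ℝ) : (Fin d → ℝ) → ℝ :=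
  fun x => fderiv ℝ g x (Pi.single l 1)

/-- Iterated partial derivative `∂_{l₁} ⋯ ∂_{l_m} g`. -/
noncomputable def iterPD (d : ℕ) : List (Fin d) → ((Fin d → ℝ) → ℝ) → ((Fin d → ℝ) → ℝ)
  | [], g => g
  | l :: ls, g => pd d l (iterPD d ls g)

/-- Linearized backward flow `B̄_{(1),k}(x) := x⁰_k + J_k⁻¹ (x − F̄(x⁰_k))`. -/
noncomputable def B1 (d : ℕ) (h : ℝ) (F : (Fin d → ℝ) ≃ (Fin d → ℝ))
    (k : Fin d → ℤ) (x : Fin d → ℝ) : Fin d → ℝ :=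
  node d h k +
    fderiv ℝ (F.symm : (Fin d → ℝ) → (Fin d → ℝ)) (F (node d h k)) (x - F (node d h k))

/-- Linearized forward flow `F̄_{(1),k}(x̂) := F̄(x⁰_k) + J_k (x̂ − x⁰_k)`. -/
noncomputable def F1 (d : ℕ) (h : ℝ) (F : (Fin d → ℝ) ≃ (Fin d → ℝ))
    (k : Fin d → ℤ) (y : Fin d → ℝ) : Fin d → ℝ :=
  F (node d h k) +
    fderiv ℝ (F : (Fin d → ℝ) → (Fin d → ℝ)) (node d h k) (y - node d h k)

/-- Enlarged radius `ρ̃_{h,k} := ρ⁰ + h⁻¹ sup_{x ∈ F̄(Σ⁰_{h,k})} ‖B̄_{(1),k}(x) − B̄(x)‖_∞`. -/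
noncomputable def ρt (d : ℕ) (h ρ0 : ℝ) (φ : (Fin d → ℝ) → ℝ)
    (F : (Fin d → ℝ) ≃ (Fin d → ℝ)) (k : Fin d → ℤ) : ℝ :=
  ρ0 + h⁻¹ * ⨆ x : (F '' Function.support (part d h φ k)),
      ‖B1 d h F k x.1 - F.symm x.1‖

/-- Enlarged a priori support `Σ̃_{h,k} := F̄_{(1),k}(B_∞(x⁰_k, h ρ̃_{h,k}))`. -/
noncomputable def St (d : ℕ) (h ρ0 : ℝ) (φ : (Fin d → ℝ) → ℝ)
    (F : (Fin d → ℝ) ≃ (Fin d → ℝ)) (k : Fin d → ℤ) : Set (Fin d → ℝ) :=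
  F1 d h F k '' Metric.closedBall (node d h k) (h * ρt d h ρ0 φ F k)

/-- Degree-`r` Taylor polynomial of `B` at `a`. -/
noncomputable def taylorP (d r : ℕ) (B : (Fin d → ℝ) → (Fin d → ℝ))
    (a x : Fin d → ℝ) : Fin d → ℝ :=
  ∑ j ∈ Finset.range (r + 1),
    (j.factorial : ℝ)⁻¹ • iteratedFDeriv ℝ j B a (fun _ => x - a)

namespace Aux

variable {d : ℕ}

def bvec (d : ℕ) (l : Fin d) : Fin d → ℝ := Pi.single l 1

lemma sum_single_smul (v : Fin d → ℝ) :
    ∑ l, v l • bvec d l = v := by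
  funext j
  simp [bvec, Finset.sum_apply, Pi.single_apply, mul_ite]

lemma fderiv_eq_sum_pd (f : (Fin d → ℝ) → ℝ) (z v : Fin d → ℝ) :
    fderiv ℝ f z v = ∑ l, v l * pd d l f z := by
  conv_lhs => rw [← sum_single_smul v]
  rw [map_sum]
  simp [pd, bvec, smul_eq_mul]

lemma multilinear_expand {m : ℕ}
    (f : ContinuousMultilinearMap ℝ (fun _ : Fin m => (Fin d → ℝ)) ℝ)
    (u : Fin m → (Fin d → ℝ)) :
    f u = ∑ ms : Fin m → Fin d,
      (∏ j, u j (ms j)) • f (fun j => bvec d (ms j)) := by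
  have h1 : f u = f (fun j => ∑ l, (u j l) • bvec d l) := by
    congr 1; funext j; rw [sum_single_smul]
  rw [h1]
  have h2 := f.toMultilinearMap.map_sum
    (g := fun (j : Fin m) (l : Fin d) => (u j l) • bvec d l)
  simp only [ContinuousMultilinearMap.coe_coe] at h2
  rw [h2]
  refine Finset.sum_congr rfl fun ms _ => ?_
  exact f.map_smul_univ (fun j => u j (ms j)) (fun j => bvec d (ms j))

lemma iterPD_eq_iteratedFDeriv {N : ℕ} {g : (Fin d → ℝ) → ℝ} (hg : ContDiff ℝ N g) :
    ∀ m : ℕ, m ≤ N → ∀ (ms : Fin m → Fin d) (x : Fin d → ℝ),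
      iterPD d (List.ofFn ms) g x
        = iteratedFDeriv ℝ m g x (fun j => bvec d (ms j)) := by
  intro m
  induction m with
  | zero =>
    intro _ ms x
    simp [List.ofFn_zero, iterPD, iteratedFDeriv_zero_apply]
  | succ m IH =>
    intro hm ms x
    have hmN : m < N := Nat.lt_of_succ_le hm
    have hdiff : Differentiable ℝ (iteratedFDeriv ℝ m g) :=
      hg.differentiable_iteratedFDeriv (by exact_mod_cast hmN)
    have hfun : iterPD d (List.ofFn (ms ∘ Fin.succ)) g
        = fun y => iteratedFDeriv ℝ m g y (fun j => bvec d (ms j.succ)) := by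
      funext y; exact IH hmN.le (ms ∘ Fin.succ) y
    have hofn : List.ofFn ms = ms 0 :: List.ofFn (ms ∘ Fin.succ) := List.ofFn_succ (f := ms)
    rw [hofn]
    show pd d (ms 0) (iterPD d (List.ofFn (ms ∘ Fin.succ)) g) x = _
    unfold pd
    rw [hfun]
    rw [fderiv_continuousMultilinear_apply_const_apply (hdiff x) _ _]
    rw [iteratedFDeriv_succ_apply_left]
    rfl


lemma iteratedDeriv_line {N : ℕ} {f : (Fin d → ℝ) → ℝ} (hf : ContDiff ℝ N f)
    (A v : Fin d → ℝ) :
    ∀ m : ℕ, m ≤ N → ∀ t : ℝ,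
      iteratedDeriv m (fun s : ℝ => f (A + s • v)) t
        = iteratedFDeriv ℝ m f (A + t • v) (fun _ => v) := by
  intro m
  induction m with
  | zero => intro _ t; simp
  | succ m IH =>
    intro hm t
    have hmN : m < N := Nat.lt_of_succ_le hm
    have hdiff : Differentiable ℝ (iteratedFDeriv ℝ m f) :=
      hf.differentiable_iteratedFDeriv (by exact_mod_cast hmN)
    rw [iteratedDeriv_succ]
    have hfun : iteratedDeriv m (fun s : ℝ => f (A + s • v))
        = fun s => iteratedFDeriv ℝ m f (A + s • v) (fun _ => v) := by
      funext s; exact IH hmN.le s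
    rw [hfun]
    have hline : HasDerivAt (fun s : ℝ => A + s • v) v t := by
      simpa using ((hasDerivAt_id t).smul_const v).const_add A
    have h1 : HasDerivAt (fun s : ℝ => iteratedFDeriv ℝ m f (A + s • v))
        (fderiv ℝ (iteratedFDeriv ℝ m f) (A + t • v) v) t :=
      (hdiff (A + t • v)).hasFDerivAt.comp_hasDerivAt t hline
    have h2 : HasDerivAt
        (fun s : ℝ => iteratedFDeriv ℝ m f (A + s • v) (fun _ : Fin m => v))
        (fderiv ℝ (iteratedFDeriv ℝ m f) (A + t • v) v (fun _ : Fin m => v)) t := by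
      have := ((ContinuousMultilinearMap.apply ℝ
        (fun _ : Fin m => (Fin d → ℝ)) ℝ (fun _ : Fin m => v)).hasFDerivAt).comp_hasDerivAt t h1
      exact this
    rw [h2.deriv, iteratedFDeriv_succ_apply_left]
    rfl

lemma iteratedDerivWithin_Icc {N : ℕ} {g : ℝ → ℝ} (hg : ContDiff ℝ N g) :
    ∀ m : ℕ, m ≤ N → ∀ t ∈ Icc (0:ℝ) 1,
      iteratedDerivWithin m g (Icc 0 1) t = iteratedDeriv m g t := by
  intro m
  induction m with
  | zero => intro _ t _; simp
  | succ m IH =>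
    intro hm t ht
    have hmN : m < N := Nat.lt_of_succ_le hm
    have hd1 : DifferentiableAt ℝ (iteratedDeriv m g) t :=
      (hg.differentiable_iteratedDeriv m (by exact_mod_cast hmN)) t
    rw [iteratedDerivWithin_succ]
    rw [derivWithin_congr (fun s hs => IH hmN.le s hs) (IH hmN.le t ht)]
    rw [hd1.derivWithin ((uniqueDiffOn_Icc one_pos) t ht)]
    rw [iteratedDeriv_succ]


lemma iteratedFDeriv_bound {N : ℕ} {f : (Fin d → ℝ) → ℝ} (hf : ContDiff ℝ N f)
    {m : ℕ} (hm : m ≤ N) {c : ℝ}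
    (hc : ∀ z : Fin d → ℝ, ∑ ms : Fin m → Fin d, |iterPD d (List.ofFn ms) f z| ≤ c)
    (z : Fin d → ℝ) (v : Fin d → ℝ) :
    |iteratedFDeriv ℝ m f z (fun _ => v)| ≤ c * ‖v‖ ^ m := by
  rw [multilinear_expand]
  calc |∑ ms : Fin m → Fin d, (∏ j, v (ms j)) • iteratedFDeriv ℝ m f z (fun j => bvec d (ms j))|
      ≤ ∑ ms : Fin m → Fin d, |(∏ j, v (ms j))| * |iteratedFDeriv ℝ m f z (fun j => bvec d (ms j))| := by
        refine (Finset.abs_sum_le_sum_abs _ _).trans ?_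
        refine le_of_eq (Finset.sum_congr rfl fun ms _ => ?_)
        rw [smul_eq_mul, abs_mul]
    _ ≤ ∑ ms : Fin m → Fin d, ‖v‖ ^ m * |iteratedFDeriv ℝ m f z (fun j => bvec d (ms j))| := by
        refine Finset.sum_le_sum fun ms _ => ?_
        refine mul_le_mul_of_nonneg_right ?_ (abs_nonneg _)
        calc |∏ j, v (ms j)| = ∏ j : Fin m, |v (ms j)| := Finset.abs_prod _ _
          _ ≤ ∏ _j : Fin m, ‖v‖ := Finset.prod_le_prod (fun _ _ => abs_nonneg _)
              (fun j _ => (Real.norm_eq_abs _) ▸ norm_le_pi_norm v (ms j))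
          _ = ‖v‖ ^ m := by simp [Finset.prod_const]
    _ = ‖v‖ ^ m * ∑ ms : Fin m → Fin d, |iterPD d (List.ofFn ms) f z| := by
        rw [Finset.mul_sum]
        refine Finset.sum_congr rfl fun ms _ => ?_
        rw [iterPD_eq_iteratedFDeriv hf m hm ms z]
    _ ≤ ‖v‖ ^ m * c := by
        exact mul_le_mul_of_nonneg_left (hc z) (by positivity)
    _ = c * ‖v‖ ^ m := mul_comm _ _

lemma taylorP_sub_le (hd : 1 ≤ d) (n : ℕ) (B : (Fin d → ℝ) → (Fin d → ℝ))
    (hB : ContDiff ℝ (n + 1 : ℕ) B) (c : ℝ)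
    (hc : ∀ (i : Fin d) (z : Fin d → ℝ),
      ∑ ms : Fin (n + 1) → Fin d, |iterPD d (List.ofFn ms) (fun y => B y i) z| ≤ c)
    (A x : Fin d → ℝ) :
    ‖taylorP d n B A x - B x‖ ≤ c * ‖x - A‖ ^ (n + 1) / (n + 1).factorial := by
  have hc0 : 0 ≤ c :=
    le_trans (Finset.sum_nonneg fun _ _ => abs_nonneg _) (hc ⟨0, hd⟩ 0)
  have hfact : (0:ℝ) < (n + 1).factorial := by positivity
  rw [pi_norm_le_iff_of_nonneg (by positivity)]
  intro i
  set v := x - A with hv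
  set f := fun y => B y i with hfdef
  have hfc : ContDiff ℝ (n + 1 : ℕ) f :=
    (ContinuousLinearMap.proj (R := ℝ) (φ := fun _ : Fin d => ℝ) i).contDiff.comp hB
  set g := fun t : ℝ => f (A + t • v) with hgdef
  have hgc : ContDiff ℝ (n + 1 : ℕ) g :=
    hfc.comp (contDiff_const.add (contDiff_id.smul contDiff_const))
  have hdiffg : Differentiable ℝ (iteratedDeriv n g) :=
    hgc.differentiable_iteratedDeriv n (by exact_mod_cast Nat.lt_succ_self n)
  have hDO : DifferentiableOn ℝ (iteratedDerivWithin n g (Icc 0 1)) (Ioo 0 1) :=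
    (hdiffg.differentiableOn).congr fun t ht =>
      iteratedDerivWithin_Icc hgc n (Nat.le_succ n) t (Ioo_subset_Icc_self ht)
  obtain ⟨t', ht', heq⟩ : ∃ x' ∈ Ioo (0:ℝ) 1, g 1 - taylorWithinEval g n (Icc 0 1) 0 1 =
      iteratedDerivWithin (n + 1) g (Icc 0 1) x' * (1 - 0) ^ (n + 1) / ((n + 1).factorial : ℝ) := by
    have := taylor_mean_remainder_lagrange (f := g) (n := n) (x₀ := 0) (x := 1)
      zero_ne_one ((hgc.of_le (by exact_mod_cast Nat.le_succ n)).contDiffOn)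
      (by rw [uIcc_of_le zero_le_one, uIoo_of_le zero_le_one]; exact hDO)
    rw [uIcc_of_le zero_le_one, uIoo_of_le zero_le_one] at this
    exact this
  have ht'' : t' ∈ Icc (0:ℝ) 1 := Ioo_subset_Icc_self ht'
  -- identify components
  have hcomp : ∀ (m : ℕ), m ≤ n + 1 → ∀ w : Fin d → ℝ,
      iteratedFDeriv ℝ m f A (fun _ => w) = iteratedFDeriv ℝ m B A (fun _ => w) i := by
    intro m hm w
    have := (ContinuousLinearMap.proj (R := ℝ) (φ := fun _ : Fin d => ℝ) i).iteratedFDeriv_comp_left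
      (hB.contDiffAt (x := A)) (by exact_mod_cast hm)
    have h2 : iteratedFDeriv ℝ m f A =
        (ContinuousLinearMap.proj (R := ℝ) (φ := fun _ : Fin d => ℝ) i).compContinuousMultilinearMap
          (iteratedFDeriv ℝ m B A) := this
    rw [h2]
    rfl
  have hg1 : g 1 = B x i := by
    simp only [hgdef, hfdef, hv, one_smul]
    congr 1
    abel
  have hTW : taylorWithinEval g n (Icc 0 1) 0 1 = (taylorP d n B A x) i := by
    rw [taylor_within_apply, taylorP, Finset.sum_apply]
    refine Finset.sum_congr rfl fun m hm => ?_
    have hm' : m ≤ n := Nat.lt_succ_iff.mp (Finset.mem_range.mp hm)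
    have hm'' : m ≤ n + 1 := hm'.trans (Nat.le_succ n)
    rw [iteratedDerivWithin_Icc hgc m hm'' 0 (by constructor <;> norm_num)]
    have := iteratedDeriv_line hfc A v m hm'' 0
    rw [this]
    have h0 : A + (0:ℝ) • v = A := by simp
    rw [h0, hcomp m hm'' v]
    simp [smul_eq_mul, hv]
  have hrem : iteratedDerivWithin (n + 1) g (Icc 0 1) t'
      = iteratedFDeriv ℝ (n + 1) f (A + t' • v) (fun _ => v) := by
    rw [iteratedDerivWithin_Icc hgc (n + 1) le_rfl t' ht'',
      iteratedDeriv_line hfc A v (n + 1) le_rfl t']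
  have hbound : |iteratedFDeriv ℝ (n + 1) f (A + t' • v) (fun _ => v)| ≤ c * ‖v‖ ^ (n + 1) :=
    iteratedFDeriv_bound hfc le_rfl (hc i) _ v
  have hfin : (taylorP d n B A x - B x) i = -(g 1 - taylorWithinEval g n (Icc 0 1) 0 1) := by
    rw [Pi.sub_apply, hTW, hg1]; ring
  rw [Real.norm_eq_abs, hfin, abs_neg, heq]
  rw [hrem]
  have : |iteratedFDeriv ℝ (n + 1) f (A + t' • v) (fun _ => v) * (1 - 0) ^ (n + 1) / (n + 1).factorial|
      = |iteratedFDeriv ℝ (n + 1) f (A + t' • v) (fun _ => v)| / (n + 1).factorial := by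
    rw [abs_div, abs_mul]
    simp [abs_of_pos hfact]
  rw [this]
  exact (div_le_div_iff_of_pos_right hfact).mpr hbound


lemma taylorP_one (B : (Fin d → ℝ) → (Fin d → ℝ)) (A x : Fin d → ℝ) :
    taylorP d 1 B A x = B A + fderiv ℝ B A (x - A) := by
  simp [taylorP, Finset.sum_range_succ, iteratedFDeriv_zero_apply, iteratedFDeriv_one_apply]

lemma fderiv_pi_bound (hd : 1 ≤ d) {F : (Fin d → ℝ) → (Fin d → ℝ)} (hF : Differentiable ℝ F)
    {cF1 : ℝ}
    (hcF1 : ∀ (i : Fin d) (x : Fin d → ℝ), ∑ l : Fin d, |pd d l (fun y => F y i) x| ≤ cF1)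
    (z v : Fin d → ℝ) : ‖fderiv ℝ F z v‖ ≤ cF1 * ‖v‖ := by
  have hc0 : 0 ≤ cF1 :=
    le_trans (Finset.sum_nonneg fun _ _ => abs_nonneg _) (hcF1 ⟨0, hd⟩ 0)
  rw [pi_norm_le_iff_of_nonneg (by positivity)]
  intro i
  have hcomp : fderiv ℝ (fun y => F y i) z
      = (ContinuousLinearMap.proj (R := ℝ) (φ := fun _ : Fin d => ℝ) i).comp (fderiv ℝ F z) :=
    ((ContinuousLinearMap.proj (R := ℝ) (φ := fun _ : Fin d => ℝ) i).hasFDerivAt.comp z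
      (hF z).hasFDerivAt).fderiv
  have h1 : (fderiv ℝ F z v) i = fderiv ℝ (fun y => F y i) z v := by rw [hcomp]; rfl
  rw [Real.norm_eq_abs, h1, fderiv_eq_sum_pd]
  calc |∑ l : Fin d, v l * pd d l (fun y => F y i) z|
      ≤ ∑ l : Fin d, |v l| * |pd d l (fun y => F y i) z| := by
        refine (Finset.abs_sum_le_sum_abs _ _).trans (le_of_eq ?_)
        exact Finset.sum_congr rfl fun l _ => abs_mul _ _
    _ ≤ ∑ l : Fin d, ‖v‖ * |pd d l (fun y => F y i) z| :=
        Finset.sum_le_sum fun l _ => mul_le_mul_of_nonneg_right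
          ((Real.norm_eq_abs (v l)) ▸ norm_le_pi_norm v l) (abs_nonneg _)
    _ = ‖v‖ * ∑ l : Fin d, |pd d l (fun y => F y i) z| := (Finset.mul_sum _ _ _).symm
    _ ≤ ‖v‖ * cF1 := mul_le_mul_of_nonneg_left (hcF1 i z) (norm_nonneg _)
    _ = cF1 * ‖v‖ := mul_comm _ _

end Aux


/-- the degree-`r` Taylor approximations of the backward flow satisfy, on the
enlarged a priori supports, `ẽ_{B,(r)}(h) ≤ h^{r+1} (ρ̃ |F̄|₁)^{r+1} |B̄|_{r+1} / (r+1)!`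
with `ρ̃ := ρ⁰ (1 + (hρ⁰/2) |F̄|₁² |B̄|₂)`. -/
theorem taylor_backward_flow_error_on_enlarged_supports
    (d r : ℕ) (hd : 1 ≤ d) (hr : 1 ≤ r) (h : ℝ) (hh : 0 < h)
    (φ : (Fin d → ℝ) → ℝ) (Lφ : ℝ≥0) (hφLip : LipschitzWith Lφ φ)
    (ρ0 : ℝ) (hρ0 : 0 < ρ0) (hφsupp : ∀ x, φ x ≠ 0 → ‖x‖ ≤ ρ0)
    (F : (Fin d → ℝ) ≃ (Fin d → ℝ))
    (hF : ContDiff ℝ 1 (F : (Fin d → ℝ) → (Fin d → ℝ)))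
    (hB : ContDiff ℝ (r + 1 : ℕ) (F.symm : (Fin d → ℝ) → (Fin d → ℝ)))
    (cF1 : ℝ) (hcF1 : ∀ (i : Fin d) (x : Fin d → ℝ),
      ∑ l : Fin d, |pd d l (fun y => F y i) x| ≤ cF1)
    (cB2 : ℝ) (hcB2 : ∀ (i : Fin d) (x : Fin d → ℝ),
      ∑ l1 : Fin d, ∑ l2 : Fin d,
        |pd d l1 (pd d l2 (fun y => F.symm y i)) x| ≤ cB2)
    (cBr : ℝ) (hcBr : ∀ (i : Fin d) (x : Fin d → ℝ),
      ∑ ls : Fin (r + 1) → Fin d,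
        |iterPD d (List.ofFn ls) (fun y => F.symm y i) x| ≤ cBr) :
    ∀ k : Fin d → ℤ, ∀ x ∈ St d h ρ0 φ F k,
      ‖taylorP d r (F.symm) (F (node d h k)) x - F.symm x‖
        ≤ h ^ (r + 1) * (ρ0 * (1 + h * ρ0 / 2 * cF1 ^ 2 * cB2) * cF1) ^ (r + 1) * cBr
            / (r + 1).factorial  := by
  intro k x hx
  classical
  have i0 : Fin d := ⟨0, hd⟩
  have hcF10 : 0 ≤ cF1 :=
    le_trans (Finset.sum_nonneg fun _ _ => abs_nonneg _) (hcF1 i0 0)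
  have hcB20 : 0 ≤ cB2 :=
    le_trans (Finset.sum_nonneg fun _ _ => Finset.sum_nonneg fun _ _ => abs_nonneg _)
      (hcB2 i0 0)
  have hcBr0 : 0 ≤ cBr :=
    le_trans (Finset.sum_nonneg fun _ _ => abs_nonneg _) (hcBr i0 0)
  set a := node d h k with ha
  set A := F (node d h k) with hA
  have hFd : Differentiable ℝ (F : (Fin d → ℝ) → (Fin d → ℝ)) := hF.differentiable one_ne_zero
  have hdb : ∀ z v : Fin d → ℝ, ‖fderiv ℝ (F : (Fin d → ℝ) → (Fin d → ℝ)) z v‖ ≤ cF1 * ‖v‖ :=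
    Aux.fderiv_pi_bound hd hFd hcF1
  have hlip : ∀ w₁ w₂ : Fin d → ℝ, ‖F w₁ - F w₂‖ ≤ cF1 * ‖w₁ - w₂‖ := fun w₁ w₂ =>
    convex_univ.norm_image_sub_le_of_norm_fderiv_le (fun z _ => hFd z)
      (fun z _ => ContinuousLinearMap.opNorm_le_bound _ hcF10 (hdb z))
      (mem_univ w₂) (mem_univ w₁)
  set P := ρ0 * (1 + h * ρ0 / 2 * cF1 ^ 2 * cB2) with hP
  have hP0 : 0 ≤ P := by
    have : 0 ≤ h * ρ0 / 2 * cF1 ^ 2 * cB2 := by positivity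
    nlinarith [hρ0.le]
  -- support bound
  have hsupp : ∀ w : Fin d → ℝ, part d h φ k w ≠ 0 → ‖w - a‖ ≤ h * ρ0 := by
    intro w hw
    have hφ : φ (fun i => w i / h - (k i : ℝ)) ≠ 0 := by
      intro h0; exact hw (by simp [part, h0])
    have h1 : ‖(fun i => w i / h - (k i : ℝ))‖ ≤ ρ0 := hφsupp _ hφ
    rw [pi_norm_le_iff_of_nonneg (by positivity)]
    intro i
    have h2 : |w i / h - (k i : ℝ)| ≤ ρ0 :=
      ((Real.norm_eq_abs _) ▸ norm_le_pi_norm (fun i => w i / h - (k i : ℝ)) i).trans h1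
    have h3 : (w - a) i = h * (w i / h - (k i : ℝ)) := by
      simp only [Pi.sub_apply, ha, node]
      field_simp
    rw [Real.norm_eq_abs, h3, abs_mul, abs_of_pos hh]
    exact mul_le_mul_of_nonneg_left h2 hh.le
  -- B1 is the degree-1 Taylor polynomial
  have hB1 : ∀ z, B1 d h F k z = taylorP d 1 (F.symm : (Fin d → ℝ) → (Fin d → ℝ)) A z := by
    intro z
    rw [Aux.taylorP_one]
    simp [B1, ← hA, Equiv.symm_apply_apply]
    rw [hA, Equiv.symm_apply_apply]
  -- cB2 reindexed
  have hc2 : ∀ (i : Fin d) (z : Fin d → ℝ),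
      ∑ ms : Fin (1 + 1) → Fin d, |iterPD d (List.ofFn ms) (fun y => F.symm y i) z| ≤ cB2 := by
    intro i z
    calc ∑ ms : Fin (1 + 1) → Fin d, |iterPD d (List.ofFn ms) (fun y => F.symm y i) z|
        = ∑ p : Fin d × Fin d, |pd d p.1 (pd d p.2 (fun y => F.symm y i)) z| := by
          refine Fintype.sum_equiv (finTwoArrowEquiv (Fin d)) _ _ fun ms => ?_
          have hofn : List.ofFn ms = [ms 0, ms 1] := by
            simp [List.ofFn_succ]
          rw [hofn]
          rfl
      _ = ∑ l1 : Fin d, ∑ l2 : Fin d, |pd d l1 (pd d l2 (fun y => F.symm y i)) z| :=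
          Fintype.sum_prod_type _
      _ ≤ cB2 := hcB2 i z
  -- ρt bound
  have hρt : ρt d h ρ0 φ F k ≤ P := by
    have hM : ∀ z : ↥(F '' Function.support (part d h φ k)),
        ‖B1 d h F k z.1 - F.symm z.1‖ ≤ cB2 * (cF1 * (h * ρ0)) ^ (1 + 1) / (1 + 1).factorial := by
      rintro ⟨z, w, hw, rfl⟩
      rw [hB1]
      have hB2c : ContDiff ℝ ((1 : ℕ) + 1 : ℕ) (F.symm : (Fin d → ℝ) → (Fin d → ℝ)) :=
        hB.of_le (by exact_mod_cast (by omega : (1 : ℕ) + 1 ≤ r + 1))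
      refine (Aux.taylorP_sub_le hd 1 _ hB2c cB2 hc2 A (F w)).trans ?_
      have hzA : ‖F w - A‖ ≤ cF1 * (h * ρ0) := by
        rw [hA]
        exact (hlip w (node d h k)).trans
          (mul_le_mul_of_nonneg_left (hsupp w hw) hcF10)
      have hpow : ‖F w - A‖ ^ (1 + 1) ≤ (cF1 * (h * ρ0)) ^ (1 + 1) :=
        pow_le_pow_left₀ (norm_nonneg _) hzA _
      have hfpos : (0:ℝ) < ((1 + 1).factorial : ℕ) := by positivity
      exact div_le_div_of_nonneg_right (mul_le_mul_of_nonneg_left hpow hcB20) hfpos.le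
    have hS : (⨆ z : ↥(F '' Function.support (part d h φ k)),
        ‖B1 d h F k z.1 - F.symm z.1‖) ≤ cB2 * (cF1 * (h * ρ0)) ^ (1 + 1) / (1 + 1).factorial :=
      Real.iSup_le hM (by positivity)
    have hstep : ρt d h ρ0 φ F k
        ≤ ρ0 + h⁻¹ * (cB2 * (cF1 * (h * ρ0)) ^ (1 + 1) / (1 + 1).factorial) := by
      unfold ρt
      have hinv : (0:ℝ) ≤ h⁻¹ := by positivity
      exact add_le_add_right (mul_le_mul_of_nonneg_left hS hinv) ρ0
    refine hstep.trans (le_of_eq ?_)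
    rw [hP]
    have h2 : (((1 + 1).factorial : ℕ) : ℝ) = 2 := by norm_num [Nat.factorial]
    rw [h2]
    field_simp
    ring
  -- main estimate
  obtain ⟨y, hy, rfl⟩ := hx
  have hyb : ‖y - a‖ ≤ h * ρt d h ρ0 φ F k := by
    rw [Metric.mem_closedBall, dist_eq_norm] at hy
    exact hy
  have hxA : ‖F1 d h F k y - A‖ ≤ cF1 * (h * P) := by
    have h1 : F1 d h F k y - A = fderiv ℝ (F : (Fin d → ℝ) → (Fin d → ℝ)) a (y - a) := by
      simp [F1, ← hA, ha]
    rw [h1]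
    refine (hdb a (y - a)).trans ?_
    have h2 : ‖y - a‖ ≤ h * P := hyb.trans (mul_le_mul_of_nonneg_left hρt hh.le)
    exact mul_le_mul_of_nonneg_left h2 hcF10
  refine (Aux.taylorP_sub_le hd r (F.symm : (Fin d → ℝ) → (Fin d → ℝ)) hB cBr hcBr A
    (F1 d h F k y)).trans ?_
  have hpow : ‖F1 d h F k y - A‖ ^ (r + 1) ≤ (cF1 * (h * P)) ^ (r + 1) :=
    pow_le_pow_left₀ (norm_nonneg _) hxA _
  have hfpos : (0:ℝ) < ((r + 1).factorial : ℕ) := by positivity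
  refine (div_le_div_of_nonneg_right (mul_le_mul_of_nonneg_left hpow hcBr0) hfpos.le).trans
    (le_of_eq ?_)
  rw [show cF1 * (h * P) = h * (P * cF1) from by ring, mul_pow]
  ring
end

section
/- The enlarged radii are uniformly controlled and the enlarged supports are localized: for every k ∈ ℤ^d one has ρ̃_{h,k} ≤ ρ̃ := ρ⁰ (1 + (hρ⁰/2) |F̄|₁² |B̄|₂), and Σ̃_{h,k} ⊆ B_∞(F̄(x⁰_k), h ρ̃ |F̄|₁). -/
open scoped NNReal
open Set

lemma clm_expand {d : ℕ} (L : (Fin d → ℝ) →L[ℝ] ℝ) (v : Fin d → ℝ) :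
    L v = ∑ l, v l * L (Pi.single l 1) := by
  have hv : v = ∑ l, v l • (Pi.single l 1 : Fin d → ℝ) := by
    ext i
    simp [Pi.single_apply, Finset.sum_apply]
  conv_lhs => rw [hv]
  simp [map_sum, map_smul, smul_eq_mul]

lemma clm_abs_le {d : ℕ} (L : (Fin d → ℝ) →L[ℝ] ℝ) (v : Fin d → ℝ) :
    |L v| ≤ (∑ l, |L (Pi.single l 1)|) * ‖v‖ := by
  rw [clm_expand]
  calc |∑ l, v l * L (Pi.single l 1)| ≤ ∑ l, |v l * L (Pi.single l 1)| :=
        Finset.abs_sum_le_sum_abs _ _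
    _ ≤ ∑ l, ‖v‖ * |L (Pi.single l 1)| := by
        refine Finset.sum_le_sum fun l _ => ?_
        rw [abs_mul]
        gcongr
        exact (Real.norm_eq_abs (v l)) ▸ norm_le_pi_norm v l
    _ = (∑ l, |L (Pi.single l 1)|) * ‖v‖ := by
        rw [Finset.sum_mul]; exact Finset.sum_congr rfl fun l _ => mul_comm _ _


-- component fderiv
lemma fderiv_comp_proj {d : ℕ} {f : (Fin d → ℝ) → (Fin d → ℝ)} {x : Fin d → ℝ}
    (hf : DifferentiableAt ℝ f x) (i : Fin d) :
    fderiv ℝ (fun y => f y i) x =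
      (ContinuousLinearMap.proj i : ((Fin d → ℝ)) →L[ℝ] ℝ).comp (fderiv ℝ f x) := by
  exact ((ContinuousLinearMap.proj i : ((Fin d → ℝ)) →L[ℝ] ℝ).hasFDerivAt.comp x
    hf.hasFDerivAt).fderiv

-- bound on difference and on Jacobian-vector products for C¹ maps with row-sum bound
lemma lip_of_pd_bound {d : ℕ} {f : (Fin d → ℝ) → (Fin d → ℝ)}
    (hf : ContDiff ℝ 1 f) {c : ℝ} (hc : 0 ≤ c)
    (hb : ∀ (i : Fin d) (x : Fin d → ℝ), ∑ l, |pd d l (fun y => f y i) x| ≤ c) :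
    (∀ z w, ‖f z - f w‖ ≤ c * ‖z - w‖) ∧
      (∀ (x v : Fin d → ℝ), ‖fderiv ℝ f x v‖ ≤ c * ‖v‖) := by
  have hdiff : Differentiable ℝ f := hf.differentiable one_ne_zero
  have hcomp : ∀ (i : Fin d) (x v : Fin d → ℝ),
      fderiv ℝ f x v i = fderiv ℝ (fun y => f y i) x v := by
    intro i x v
    rw [fderiv_comp_proj (hdiff x) i]
    rfl
  have key : ∀ (i : Fin d) (x v : Fin d → ℝ),
      |fderiv ℝ (fun y => f y i) x v| ≤ c * ‖v‖ := by
    intro i x v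
    calc |fderiv ℝ (fun y => f y i) x v|
        ≤ (∑ l, |fderiv ℝ (fun y => f y i) x (Pi.single l 1)|) * ‖v‖ := clm_abs_le _ _
      _ ≤ c * ‖v‖ := by
          apply mul_le_mul_of_nonneg_right _ (norm_nonneg v)
          exact hb i x
  constructor
  · intro z w
    rw [← dist_eq_norm, ← dist_eq_norm, dist_pi_le_iff (by positivity)]
    intro i
    have hdi : Differentiable ℝ (fun y => f y i) :=
      fun x => ((ContinuousLinearMap.proj i :
        ((Fin d → ℝ)) →L[ℝ] ℝ)).differentiableAt.comp x (hdiff x)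
    have hbound : ∀ x ∈ (univ : Set (Fin d → ℝ)),
        ‖fderiv ℝ (fun y => f y i) x‖ ≤ c := by
      intro x _
      refine ContinuousLinearMap.opNorm_le_bound _ hc fun v => ?_
      rw [Real.norm_eq_abs]
      exact key i x v
    have := (convex_univ (𝕜 := ℝ)).norm_image_sub_le_of_norm_fderiv_le
      (fun x _ => (hdi x)) hbound (mem_univ w) (mem_univ z)
    simpa [dist_eq_norm, Real.dist_eq] using this
  · intro x v
    rw [← dist_zero_right, dist_pi_le_iff (by positivity)]
    intro i
    simp only [Real.dist_eq, Pi.zero_apply, sub_zero, hcomp i x v]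
    exact key i x v

lemma second_order_bound {f f' f'' : ℝ → ℝ} {M : ℝ}
    (hf : ∀ t, HasDerivAt f (f' t) t) (hf' : ∀ t, HasDerivAt f' (f'' t) t)
    (hM : ∀ t ∈ Icc (0:ℝ) 1, |f'' t| ≤ M) :
    |f 1 - f 0 - f' 0| ≤ M / 2 := by
  set g : ℝ → ℝ := fun t => f t - f 0 - t * f' 0 with hgdef
  have hg' : ∀ t, HasDerivAt g (f' t - f' 0) t := by
    intro t
    have := ((hf t).sub_const (f 0)).sub ((hasDerivAt_id t).mul_const (f' 0))
    simp only [one_mul] at this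
    exact this
  -- first: ‖f' x - f' 0‖ ≤ M * x on [0,1]
  have step1 : ∀ x ∈ Icc (0:ℝ) 1, ‖f' x - f' 0‖ ≤ M * (x - 0) := by
    refine norm_image_sub_le_of_norm_deriv_right_le_segment
      (fun x _ => (hf' x).continuousAt.continuousWithinAt)
      (fun x _ => (hf' x).hasDerivWithinAt) ?_
    intro x hx
    rw [Real.norm_eq_abs]
    exact hM x ⟨hx.1, hx.2.le⟩
  have main : ∀ x ∈ Icc (0:ℝ) 1, ‖g x‖ ≤ M / 2 * x ^ 2 := by
    refine image_norm_le_of_norm_deriv_right_le_deriv_boundary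
      (f := g) (f' := fun t => f' t - f' 0)
      (fun x _ => (hg' x).continuousAt.continuousWithinAt)
      (fun x _ => (hg' x).hasDerivWithinAt)
      ?_ (B' := fun x => M * x) ?_ ?_
    · simp [hgdef]
    · intro x
      have := (hasDerivAt_pow 2 x).const_mul (M / 2)
      refine this.congr_deriv ?_
      norm_num
      ring
    · intro x hx
      have := step1 x ⟨hx.1, hx.2.le⟩
      simpa using this
  have := main 1 (right_mem_Icc.2 zero_le_one)
  simp only [hgdef, one_pow, mul_one, one_mul] at this
  rw [Real.norm_eq_abs] at this
  exact this

lemma taylor_quad_bound {d : ℕ} {g : (Fin d → ℝ) → ℝ} (hg : ContDiff ℝ 2 g)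
    {c : ℝ} (hc : ∀ x, ∑ l1 : Fin d, ∑ l2 : Fin d, |pd d l1 (pd d l2 g) x| ≤ c)
    (a u : Fin d → ℝ) :
    |g (a + u) - g a - fderiv ℝ g a u| ≤ c / 2 * ‖u‖ ^ 2 := by
  have hgd : Differentiable ℝ g := hg.differentiable two_ne_zero
  have hline : ∀ t : ℝ, HasDerivAt (fun t : ℝ => a + t • u) u t := by
    intro t
    simpa using ((hasDerivAt_id t).smul_const u).const_add a
  have hfd : ContDiff ℝ 1 (fderiv ℝ g) := hg.fderiv_right (by norm_num)
  have happ : ∀ w : Fin d → ℝ, ContDiff ℝ 1 (fun y => fderiv ℝ g y w) := by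
    intro w
    exact (ContinuousLinearMap.apply ℝ ℝ w).contDiff.comp hfd
  have hψ : ∀ t : ℝ, HasDerivAt (fun s : ℝ => g (a + s • u))
      (fderiv ℝ g (a + t • u) u) t := fun t =>
    (hgd (a + t • u)).hasFDerivAt.comp_hasDerivAt t (hline t)
  have hψ' : ∀ t : ℝ, HasDerivAt (fun s : ℝ => fderiv ℝ g (a + s • u) u)
      (fderiv ℝ (fun y => fderiv ℝ g y u) (a + t • u) u) t := fun t =>
    by have := (((happ u).differentiable one_ne_zero) (a + t • u)).hasFDerivAt.comp_hasDerivAt t (hline t); exact this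
  have hc0 : 0 ≤ c := le_trans
    (Finset.sum_nonneg fun _ _ => Finset.sum_nonneg fun _ _ => abs_nonneg _) (hc a)
  have hbnd : ∀ t ∈ Icc (0:ℝ) 1,
      |fderiv ℝ (fun y => fderiv ℝ g y u) (a + t • u) u| ≤ c * ‖u‖ ^ 2 := by
    intro t _
    set x := a + t • u with hx
    set L := fderiv ℝ (fun y => fderiv ℝ g y u) x with hL
    have e1 : ∀ l1 : Fin d, L (Pi.single l1 1) = ∑ l2, u l2 * pd d l1 (pd d l2 g) x := by
      intro l1
      have hfun : (fun y => fderiv ℝ g y u) = fun y => ∑ l2, u l2 * pd d l2 g y := by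
        funext y; exact clm_expand (fderiv ℝ g y) u
      rw [hL, hfun]
      have hsum : HasFDerivAt (fun y => ∑ l2, u l2 * pd d l2 g y)
          (∑ l2, u l2 • fderiv ℝ (pd d l2 g) x) x := by
        refine HasFDerivAt.fun_sum fun l2 _ => ?_
        have hD : HasFDerivAt (pd d l2 g) (fderiv ℝ (pd d l2 g) x) x :=
          (((happ (Pi.single l2 1)).differentiable one_ne_zero) x).hasFDerivAt
        simpa [smul_eq_mul] using hD.const_mul (u l2)
      rw [hsum.fderiv]
      simp [pd, ContinuousLinearMap.sum_apply, ContinuousLinearMap.smul_apply, smul_eq_mul]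
    have h1 : |L u| ≤ (∑ l1, |L (Pi.single l1 1)|) * ‖u‖ := clm_abs_le _ _
    have h2 : ∑ l1, |L (Pi.single l1 1)| ≤ c * ‖u‖ := by
      calc ∑ l1, |L (Pi.single l1 1)|
          ≤ ∑ l1, ∑ l2, |u l2| * |pd d l1 (pd d l2 g) x| := by
            refine Finset.sum_le_sum fun l1 _ => ?_
            rw [e1 l1]
            refine (Finset.abs_sum_le_sum_abs _ _).trans ?_
            exact Finset.sum_le_sum fun l2 _ => (abs_mul _ _).le
        _ ≤ ∑ l1, ∑ l2, ‖u‖ * |pd d l1 (pd d l2 g) x| := by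
            refine Finset.sum_le_sum fun l1 _ => Finset.sum_le_sum fun l2 _ => ?_
            have := norm_le_pi_norm u l2
            rw [Real.norm_eq_abs] at this
            exact mul_le_mul_of_nonneg_right this (abs_nonneg _)
        _ = ‖u‖ * ∑ l1, ∑ l2, |pd d l1 (pd d l2 g) x| := by
            simp [Finset.mul_sum]
        _ ≤ ‖u‖ * c := mul_le_mul_of_nonneg_left (hc x) (norm_nonneg u)
        _ = c * ‖u‖ := mul_comm _ _
    calc |L u| ≤ (∑ l1, |L (Pi.single l1 1)|) * ‖u‖ := h1
      _ ≤ c * ‖u‖ * ‖u‖ := mul_le_mul_of_nonneg_right h2 (norm_nonneg u)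
      _ = c * ‖u‖ ^ 2 := by ring
  have key := second_order_bound (f := fun s : ℝ => g (a + s • u))
    (f' := fun s : ℝ => fderiv ℝ g (a + s • u) u)
    (f'' := fun s : ℝ => fderiv ℝ (fun y => fderiv ℝ g y u) (a + s • u) u)
    hψ hψ' hbnd
  simp only [one_smul, zero_smul, add_zero] at key
  calc |g (a + u) - g a - fderiv ℝ g a u| ≤ c * ‖u‖ ^ 2 / 2 := key
    _ = c / 2 * ‖u‖ ^ 2 := by ring

/-- the enlarged radii are uniformly controlled,
`ρ̃_{h,k} ≤ ρ̃ := ρ⁰ (1 + (hρ⁰/2)|F̄|₁²|B̄|₂)`, and the enlarged supports are localized,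
`Σ̃_{h,k} ⊆ B_∞(F̄(x⁰_k), h ρ̃ |F̄|₁)`. -/
theorem enlarged_radii_and_supports_localized
    (d : ℕ) (hd : 1 ≤ d) (h : ℝ) (hh : 0 < h)
    (φ : (Fin d → ℝ) → ℝ) (Lφ : ℝ≥0) (hφLip : LipschitzWith Lφ φ)
    (ρ0 : ℝ) (hρ0 : 0 < ρ0) (hφsupp : ∀ x, φ x ≠ 0 → ‖x‖ ≤ ρ0)
    (F : (Fin d → ℝ) ≃ (Fin d → ℝ))
    (hF : ContDiff ℝ 1 (F : (Fin d → ℝ) → (Fin d → ℝ)))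
    (hB : ContDiff ℝ 2 (F.symm : (Fin d → ℝ) → (Fin d → ℝ)))
    (cF1 : ℝ) (hcF1 : ∀ (i : Fin d) (x : Fin d → ℝ),
      ∑ l : Fin d, |pd d l (fun y => F y i) x| ≤ cF1)
    (cB2 : ℝ) (hcB2 : ∀ (i : Fin d) (x : Fin d → ℝ),
      ∑ l1 : Fin d, ∑ l2 : Fin d,
        |pd d l1 (pd d l2 (fun y => F.symm y i)) x| ≤ cB2) :
    ∀ k : Fin d → ℤ,
      ρt d h ρ0 φ F k ≤ ρ0 * (1 + h * ρ0 / 2 * cF1 ^ 2 * cB2) ∧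
      St d h ρ0 φ F k ⊆
        Metric.closedBall (F (node d h k))
          (h * (ρ0 * (1 + h * ρ0 / 2 * cF1 ^ 2 * cB2)) * cF1) := by
  intro k
  set x0 : Fin d → ℝ := node d h k with hx0
  set a : Fin d → ℝ := F x0 with ha
  have hcF1nn : 0 ≤ cF1 :=
    le_trans (Finset.sum_nonneg fun _ _ => abs_nonneg _) (hcF1 ⟨0, hd⟩ 0)
  have hcB2nn : 0 ≤ cB2 := le_trans
    (Finset.sum_nonneg fun _ _ => Finset.sum_nonneg fun _ _ => abs_nonneg _) (hcB2 ⟨0, hd⟩ 0)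
  obtain ⟨hlip, hjac⟩ := lip_of_pd_bound hF hcF1nn hcF1
  have hdiffB : Differentiable ℝ (F.symm : (Fin d → ℝ) → (Fin d → ℝ)) :=
    hB.differentiable two_ne_zero
  -- support localization
  have hsupp : ∀ z ∈ Function.support (part d h φ k), ‖z - x0‖ ≤ h * ρ0 := by
    intro z hz
    have hφne : φ (fun i => z i / h - (k i : ℝ)) ≠ 0 := by
      intro h0
      apply hz
      simp [part, h0]
    have hb := hφsupp _ hφne
    have heq : z - x0 = h • (fun i => z i / h - (k i : ℝ)) := by
      funext i
      simp only [Pi.sub_apply, Pi.smul_apply, smul_eq_mul, hx0, node]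
      field_simp
    rw [heq, norm_smul, Real.norm_eq_abs, abs_of_pos hh]
    exact mul_le_mul_of_nonneg_left hb hh.le
  -- Taylor estimate on the sup terms
  have hTay : ∀ z ∈ Function.support (part d h φ k),
      ‖B1 d h F k (F z) - F.symm (F z)‖ ≤ h ^ 2 * ρ0 ^ 2 * cF1 ^ 2 * cB2 / 2 := by
    intro z hz
    set u : Fin d → ℝ := F z - a with hu
    have h1 : a + u = F z := by rw [hu]; abel
    have hvec : B1 d h F k (F z) - F.symm (F z) =
        -(F.symm (a + u) - F.symm a -
          fderiv ℝ (F.symm : (Fin d → ℝ) → (Fin d → ℝ)) a u) := by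
      have h2 : F.symm (F z) = z := F.symm_apply_apply z
      have h3 : (F.symm a : Fin d → ℝ) = x0 := F.symm_apply_apply x0
      rw [h1, h2, h3]
      show x0 + fderiv ℝ (F.symm : (Fin d → ℝ) → (Fin d → ℝ)) a (F z - a) - z
        = -(z - x0 - fderiv ℝ (F.symm : (Fin d → ℝ) → (Fin d → ℝ)) a u)
      rw [← hu]
      abel
    rw [hvec, norm_neg]
    have hcomp : ∀ i : Fin d,
        ‖(F.symm (a + u) - F.symm a -
          fderiv ℝ (F.symm : (Fin d → ℝ) → (Fin d → ℝ)) a u) i‖ ≤ cB2 / 2 * ‖u‖ ^ 2 := by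
      intro i
      have hgi : ContDiff ℝ 2 (fun y => F.symm y i) :=
        ((ContinuousLinearMap.proj i : ((Fin d → ℝ)) →L[ℝ] ℝ).contDiff).comp hB
      have hfi : fderiv ℝ (F.symm : (Fin d → ℝ) → (Fin d → ℝ)) a u i
          = fderiv ℝ (fun y => F.symm y i) a u := by
        rw [fderiv_comp_proj (hdiffB a) i]; rfl
      have := taylor_quad_bound hgi (hcB2 i) a u
      simpa [Real.norm_eq_abs, Pi.sub_apply, hfi] using this
    have hnorm : ‖F.symm (a + u) - F.symm a -
        fderiv ℝ (F.symm : (Fin d → ℝ) → (Fin d → ℝ)) a u‖ ≤ cB2 / 2 * ‖u‖ ^ 2 := by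
      rw [pi_norm_le_iff_of_nonneg (by positivity)]
      exact hcomp
    have hulen : ‖u‖ ≤ cF1 * (h * ρ0) := by
      have := hlip z x0
      rw [hu, ha]
      exact this.trans (mul_le_mul_of_nonneg_left (hsupp z hz) hcF1nn)
    have husq : ‖u‖ ^ 2 ≤ (cF1 * (h * ρ0)) ^ 2 :=
      pow_le_pow_left₀ (norm_nonneg u) hulen 2
    calc ‖F.symm (a + u) - F.symm a -
        fderiv ℝ (F.symm : (Fin d → ℝ) → (Fin d → ℝ)) a u‖
        ≤ cB2 / 2 * ‖u‖ ^ 2 := hnorm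
      _ ≤ cB2 / 2 * (cF1 * (h * ρ0)) ^ 2 :=
          mul_le_mul_of_nonneg_left husq (by positivity)
      _ = h ^ 2 * ρ0 ^ 2 * cF1 ^ 2 * cB2 / 2 := by ring
  -- Part 1
  have hρtle : ρt d h ρ0 φ F k ≤ ρ0 * (1 + h * ρ0 / 2 * cF1 ^ 2 * cB2) := by
    have hS : (⨆ x : (F '' Function.support (part d h φ k)),
        ‖B1 d h F k x.1 - F.symm x.1‖) ≤ h ^ 2 * ρ0 ^ 2 * cF1 ^ 2 * cB2 / 2 := by
      refine Real.iSup_le ?_ (by positivity)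
      rintro ⟨y, z, hz, rfl⟩
      exact hTay z hz
    unfold ρt
    have step : h⁻¹ * (⨆ x : (F '' Function.support (part d h φ k)),
        ‖B1 d h F k x.1 - F.symm x.1‖) ≤ h⁻¹ * (h ^ 2 * ρ0 ^ 2 * cF1 ^ 2 * cB2 / 2) :=
      mul_le_mul_of_nonneg_left hS (inv_nonneg.2 hh.le)
    have heq : ρ0 + h⁻¹ * (h ^ 2 * ρ0 ^ 2 * cF1 ^ 2 * cB2 / 2)
        = ρ0 * (1 + h * ρ0 / 2 * cF1 ^ 2 * cB2) := by
      field_simp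
    calc ρ0 + h⁻¹ * (⨆ x : (F '' Function.support (part d h φ k)),
          ‖B1 d h F k x.1 - F.symm x.1‖)
        ≤ ρ0 + h⁻¹ * (h ^ 2 * ρ0 ^ 2 * cF1 ^ 2 * cB2 / 2) := by linarith
      _ = ρ0 * (1 + h * ρ0 / 2 * cF1 ^ 2 * cB2) := heq
  refine ⟨hρtle, ?_⟩
  -- Part 2
  rintro y ⟨w, hw, rfl⟩
  rw [Metric.mem_closedBall, dist_eq_norm]
  have h1 : F1 d h F k w - F x0
      = fderiv ℝ (F : (Fin d → ℝ) → (Fin d → ℝ)) x0 (w - x0) := by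
    show a + fderiv ℝ (F : (Fin d → ℝ) → (Fin d → ℝ)) x0 (w - x0) - a = _
    abel
  rw [h1]
  have h3 : ‖w - x0‖ ≤ h * (ρ0 * (1 + h * ρ0 / 2 * cF1 ^ 2 * cB2)) := by
    have hmem := Metric.mem_closedBall.1 hw
    rw [dist_eq_norm] at hmem
    exact hmem.trans (mul_le_mul_of_nonneg_left hρtle hh.le)
  calc ‖fderiv ℝ (F : (Fin d → ℝ) → (Fin d → ℝ)) x0 (w - x0)‖
      ≤ cF1 * ‖w - x0‖ := hjac x0 (w - x0)
    _ ≤ cF1 * (h * (ρ0 * (1 + h * ρ0 / 2 * cF1 ^ 2 * cB2))) :=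
        mul_le_mul_of_nonneg_left h3 hcF1nn
    _ = h * (ρ0 * (1 + h * ρ0 / 2 * cF1 ^ 2 * cB2)) * cF1 := by ring
end

section
/- The fixed-shape (traditional smoothed) particle method does not converge for the rigid rotation of angle π/4 applied to the constant density 1 with tensor hat particles: Σ_{k∈ℤ²} φ(R k) = 1 + 2(√2 − 1)², where φ(x₁,x₂) := max(1−|x₁|,0)·max(1−|x₂|,0) and R is the rotation of ℝ² by angle π/4. Consequently, for every h > 0 the fixed-shape particle approximation Σ_{k∈ℤ²} h² · h^{−2} φ(h^{−1}(x − R(hk))) of the exact transported solution f ≡ 1 has, at the point x = 0, the error 2(√2 − 1)², independently of h. -/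
/-- Two-dimensional tensor-product hat function
`φ(x₁,x₂) := max(1−|x₁|,0) · max(1−|x₂|,0)`. -/
noncomputable def hatFn (p : ℝ × ℝ) : ℝ :=
  max (1 - |p.1|) 0 * max (1 - |p.2|) 0

/-- Rotation of `ℝ²` by angle `π/4` about the origin. -/
noncomputable def rotQuarterPi (p : ℝ × ℝ) : ℝ × ℝ :=
  ((p.1 - p.2) / Real.sqrt 2, (p.1 + p.2) / Real.sqrt 2)

def S : Finset (ℤ × ℤ) := {(0,0),(1,0),(-1,0),(0,1),(0,-1)}

lemma max_zero_aux {x : ℝ} (hx : 2 ≤ |x|) : max (1 - |x / Real.sqrt 2|) 0 = 0 := by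
  have hs : (0:ℝ) < Real.sqrt 2 := Real.sqrt_pos.mpr (by norm_num)
  have hsq : Real.sqrt 2 ^ 2 = 2 := Real.sq_sqrt (by norm_num)
  have h2 : Real.sqrt 2 ≤ 2 := by nlinarith
  have : 1 ≤ |x| / Real.sqrt 2 := by
    rw [le_div_iff₀ hs]; linarith
  rw [abs_div, abs_of_nonneg hs.le]
  exact max_eq_right (by linarith)

lemma supp_zero (k : ℤ × ℤ) (hk : k ∉ S) :
    hatFn (rotQuarterPi ((k.1 : ℝ), (k.2 : ℝ))) = 0 := by
  obtain ⟨a, b⟩ := k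
  have h : 2 ≤ |a - b| ∨ 2 ≤ |a + b| := by
    simp only [S, Finset.mem_insert, Finset.mem_singleton, Prod.mk.injEq, not_or] at hk
    have h4 : 2 ≤ a - b ∨ a - b ≤ -2 ∨ 2 ≤ a + b ∨ a + b ≤ -2 := by omega
    rcases h4 with h | h | h | h
    · left; rw [le_abs]; left; exact h
    · left; rw [le_abs]; right; omega
    · right; rw [le_abs]; left; exact h
    · right; rw [le_abs]; right; omega
  have cast1 : ((a : ℝ) - b) = ((a - b : ℤ) : ℝ) := by push_cast; ring
  have cast2 : ((a : ℝ) + b) = ((a + b : ℤ) : ℝ) := by push_cast; ring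
  simp only [hatFn, rotQuarterPi]
  rcases h with h | h
  · have : (2:ℝ) ≤ |(a:ℝ) - b| := by
      rw [cast1, ← Int.cast_abs]; exact_mod_cast h
    rw [max_zero_aux this, zero_mul]
  · have : (2:ℝ) ≤ |(a:ℝ) + b| := by
      rw [cast2, ← Int.cast_abs]; exact_mod_cast h
    rw [max_zero_aux this, mul_zero]

lemma sum_val :
    (∑' k : ℤ × ℤ, hatFn (rotQuarterPi ((k.1 : ℝ), (k.2 : ℝ))))
      = 1 + 2 * (Real.sqrt 2 - 1) ^ 2 := by
  rw [tsum_eq_sum (s := S) supp_zero]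
  have hs : (0:ℝ) < Real.sqrt 2 := Real.sqrt_pos.mpr (by norm_num)
  have hsq : Real.sqrt 2 ^ 2 = 2 := Real.sq_sqrt (by norm_num)
  have h1 : (1:ℝ) ≤ Real.sqrt 2 := by nlinarith
  have hle : 1 / Real.sqrt 2 ≤ 1 := by rw [div_le_one hs]; exact h1
  simp only [S]
  rw [Finset.sum_insert (by decide), Finset.sum_insert (by decide),
      Finset.sum_insert (by decide), Finset.sum_insert (by decide),
      Finset.sum_singleton]
  simp only [hatFn, rotQuarterPi]
  push_cast
  rw [show ((0:ℝ) - 0) / Real.sqrt 2 = 0 by ring, show ((0:ℝ) + 0) / Real.sqrt 2 = 0 by ring]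
  have e1 : |(1:ℝ) / Real.sqrt 2| = 1 / Real.sqrt 2 := abs_of_nonneg (by positivity)
  have e2 : |(-1:ℝ) / Real.sqrt 2| = 1 / Real.sqrt 2 := by
    rw [abs_div, abs_neg, abs_one, abs_of_nonneg hs.le]
  have m1 : max (1 - 1 / Real.sqrt 2) 0 = 1 - 1 / Real.sqrt 2 := max_eq_left (by linarith)
  norm_num
  have e3 : |Real.sqrt 2|⁻¹ = 1 / Real.sqrt 2 := by
    rw [abs_of_nonneg hs.le]; ring
  rw [e3, e2, m1]
  field_simp
  nlinarith [hsq, hs]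


/-- the fixed-shape particle method does not converge for the rigid rotation
of angle `π/4` applied to the constant density `1` with tensor hat particles:
`Σ_{k∈ℤ²} φ(R k) = 1 + 2(√2 − 1)²`, and consequently for every `h > 0` the fixed-shape
particle approximation of the exact solution `f ≡ 1` has, at the point `x = 0`, the error
`2(√2 − 1)²`, independently of `h`. -/
theorem fixed_shape_particles_do_not_converge :
    (∑' k : ℤ × ℤ, hatFn (rotQuarterPi ((k.1 : ℝ), (k.2 : ℝ))))
        = 1 + 2 * (Real.sqrt 2 - 1) ^ 2 ∧
    ∀ h : ℝ, 0 < h →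
      |(∑' k : ℤ × ℤ, h ^ 2 *
            ((h ^ 2)⁻¹ * hatFn
              ((0 - (rotQuarterPi (h * (k.1 : ℝ), h * (k.2 : ℝ))).1) / h,
               (0 - (rotQuarterPi (h * (k.1 : ℝ), h * (k.2 : ℝ))).2) / h)))
          - 1|
        = 2 * (Real.sqrt 2 - 1) ^ 2 := by
  refine ⟨sum_val, fun h hh => ?_⟩
  have hne : h ≠ 0 := hh.ne'
  have key : ∀ k : ℤ × ℤ,
      h ^ 2 * ((h ^ 2)⁻¹ * hatFn
        ((0 - (rotQuarterPi (h * (k.1 : ℝ), h * (k.2 : ℝ))).1) / h,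
         (0 - (rotQuarterPi (h * (k.1 : ℝ), h * (k.2 : ℝ))).2) / h))
      = hatFn (rotQuarterPi ((k.1 : ℝ), (k.2 : ℝ))) := by
    intro k
    have hh2 : h ^ 2 ≠ 0 := pow_ne_zero 2 hne
    rw [← mul_assoc, mul_inv_cancel₀ hh2, one_mul]
    have e1 : (0 - (rotQuarterPi (h * (k.1 : ℝ), h * (k.2 : ℝ))).1) / h
        = -((rotQuarterPi ((k.1 : ℝ), (k.2 : ℝ))).1) := by
      simp only [rotQuarterPi]; field_simp; ring
    have e2 : (0 - (rotQuarterPi (h * (k.1 : ℝ), h * (k.2 : ℝ))).2) / h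
        = -((rotQuarterPi ((k.1 : ℝ), (k.2 : ℝ))).2) := by
      simp only [rotQuarterPi]; field_simp; ring
    rw [e1, e2]
    simp [hatFn, abs_neg]
  rw [tsum_congr key, sum_val]
  rw [show (1:ℝ) + 2 * (Real.sqrt 2 - 1) ^ 2 - 1 = 2 * (Real.sqrt 2 - 1) ^ 2 by ring]
  exact abs_of_nonneg (by positivity)
end

section
/- The quasi-interpolation scheme with cubic B-splines and coefficients (a₀, a₁) = (8/6, −1/6) reproduces polynomials of degree at most three: for every polynomial q : ℝ → ℝ of degree ≤ 3 and every x ∈ ℝ, Σ_{k∈ℤ} ((8/6) q(k) − (1/6) q(k−1) − (1/6) q(k+1)) · 𝓑₃(x − k) = q(x). -/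
open MeasureTheory intervalIntegral

noncomputable def pos (y : ℝ) : ℝ := max y 0
lemma pos_of_nonneg {y : ℝ} (h : 0 ≤ y) : pos y = y := max_eq_left h
lemma pos_of_nonpos {y : ℝ} (h : y ≤ 0) : pos y = 0 := max_eq_right h
@[fun_prop]
lemma continuous_pos_fun : Continuous pos := continuous_id.max continuous_const




lemma hasDerivAt_pos_pow (n : ℕ) (hn : 2 ≤ n) (x : ℝ) :
    HasDerivAt (fun t => pos t ^ n) ((n : ℝ) * pos x ^ (n - 1)) x := by
  rcases lt_trichotomy x 0 with hx | hx | hx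
  · have h0 : HasDerivAt (fun _ : ℝ => (0:ℝ)) 0 x := hasDerivAt_const x 0
    have : HasDerivAt (fun t => pos t ^ n) 0 x := by
      apply h0.congr_of_eventuallyEq
      filter_upwards [Iio_mem_nhds hx] with t ht
      simp [pos_of_nonpos (le_of_lt ht), zero_pow (by omega : n ≠ 0)]
    simpa [pos_of_nonpos hx.le, zero_pow (by omega : n - 1 ≠ 0)] using this
  · subst hx
    rw [hasDerivAt_iff_tendsto_slope]
    have hb : ∀ t : ℝ, t ≠ 0 → |slope (fun t => pos t ^ n) 0 t| ≤ |t| ^ (n-1) := by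
      intro t ht
      rw [slope_def_field]
      rcases le_or_gt t 0 with h | h
      · rw [pos_of_nonpos h, pos_of_nonpos le_rfl, zero_pow (by omega : n ≠ 0)]
        simp only [sub_self, zero_div, abs_zero]
        positivity
      · rw [pos_of_nonneg h.le, pos_of_nonpos le_rfl, zero_pow (by omega : n ≠ 0),
          sub_zero, sub_zero, show n = (n-1)+1 by omega, pow_succ, mul_div_assoc,
          div_self ht, mul_one, abs_pow]
        simp [Nat.sub_add_cancel]
    have hlim : Filter.Tendsto (fun t : ℝ => |t| ^ (n-1)) (nhdsWithin 0 {(0:ℝ)}ᶜ) (nhds 0) := by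
      have := ((continuous_abs.pow (n-1)).tendsto 0).mono_left (nhdsWithin_le_nhds (s := {(0:ℝ)}ᶜ))
      simp [zero_pow (by omega : n - 1 ≠ 0)] at this; exact this
    have : Filter.Tendsto (slope (fun t => pos t ^ n) 0) (nhdsWithin 0 {(0:ℝ)}ᶜ) (nhds 0) := by
      apply squeeze_zero_norm' _ hlim
      filter_upwards [self_mem_nhdsWithin] with t ht
      exact hb t ht
    simpa [pos_of_nonpos (le_refl (0:ℝ)), zero_pow (by omega : n - 1 ≠ 0)] using this
  · have h0 : HasDerivAt (fun t : ℝ => t ^ n) ((n:ℝ) * x ^ (n-1)) x := by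
      simpa using hasDerivAt_pow n x
    have : HasDerivAt (fun t => pos t ^ n) ((n:ℝ) * x ^ (n-1)) x := by
      apply h0.congr_of_eventuallyEq
      filter_upwards [Ioi_mem_nhds hx] with t ht
      simp [pos_of_nonneg (le_of_lt ht)]
    simpa [pos_of_nonneg hx.le] using this




lemma continuous_pos_shift_pow (c : ℝ) (n : ℕ) :
    Continuous (fun t : ℝ => pos (t + c) ^ n) :=
  (continuous_pos_fun.comp (continuous_id.add continuous_const)).pow n

lemma intervalIntegrable_pos_shift_pow (c a b : ℝ) (n : ℕ) :
    IntervalIntegrable (fun t : ℝ => pos (t + c) ^ n) volume a b :=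
  (continuous_pos_shift_pow c n).intervalIntegrable a b

lemma integral_pos_shift_pow (n : ℕ) (hn : 1 ≤ n) (c a b : ℝ) :
    ∫ t in a..b, pos (t + c) ^ n
      = (pos (b + c) ^ (n+1) - pos (a + c) ^ (n+1)) / (n+1) := by
  have key : ∀ t ∈ Set.uIcc a b,
      HasDerivAt (fun t => pos (t + c) ^ (n+1) / (n+1)) (pos (t + c) ^ n) t := by
    intro t _
    have h1 : HasDerivAt (fun t : ℝ => t + c) 1 t := (hasDerivAt_id t).add_const c
    have h2 := (hasDerivAt_pos_pow (n+1) (by omega) (t + c)).comp t h1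
    have h3 := h2.div_const ((n:ℝ)+1)
    refine h3.congr_deriv ?_
    push_cast
    field_simp
  have := integral_eq_sub_of_hasDerivAt key
    ((continuous_pos_shift_pow c n).intervalIntegrable a b)
  rw [this]
  ring

lemma B0_integrable : Integrable (Set.indicator (Set.Icc (-(1 : ℝ) / 2) (1 / 2)) (fun _ => (1 : ℝ))) volume := by
  rw [integrable_indicator_iff measurableSet_Icc]
  exact integrableOn_const measure_Icc_lt_top.ne

lemma integral_congr_off_countable {f g : ℝ → ℝ} {a b : ℝ} (s : Set ℝ) (hs : s.Countable)
    (h : ∀ t, t ∈ Set.uIoc a b → t ∉ s → f t = g t) :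
    ∫ t in a..b, f t = ∫ t in a..b, g t := by
  apply intervalIntegral.integral_congr_ae
  have hz : ∀ᵐ t : ℝ, t ∉ s := by
    rw [← MeasureTheory.measure_eq_zero_iff_ae_notMem]
    exact hs.measure_zero volume
  filter_upwards [hz] with t ht hmem
  exact h t hmem ht

/-- Centered cardinal B-splines: `𝓑₀ = χ_{[−1/2,1/2]}` and
`𝓑_p(x) = ∫_{x−1/2}^{x+1/2} 𝓑_{p−1}(t) dt`. -/
noncomputable def Bspline : ℕ → ℝ → ℝ
  | 0 => Set.indicator (Set.Icc (-(1 : ℝ) / 2) (1 / 2)) (fun _ => (1 : ℝ))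
  | p + 1 => fun x => ∫ t in (x - 1 / 2)..(x + 1 / 2), Bspline p t




lemma B0_apply (t : ℝ) :
    Bspline 0 t = if t ∈ Set.Icc (-(1 : ℝ) / 2) (1 / 2) then 1 else 0 := by
  simp [Bspline, Set.indicator_apply]

lemma B0_ii (a b : ℝ) : IntervalIntegrable (Bspline 0) volume a b := by
  have : Bspline 0 = Set.indicator (Set.Icc (-(1 : ℝ) / 2) (1 / 2)) (fun _ => (1 : ℝ)) := rfl
  rw [this]; exact B0_integrable.intervalIntegrable

lemma B1_eq (x : ℝ) : Bspline 1 x = pos (x + 1) - 2 * pos x + pos (x - 1) := by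
  have hdef : Bspline 1 x = ∫ t in (x - 1/2)..(x + 1/2), Bspline 0 t := rfl
  rw [hdef]
  rcases le_or_gt x (-1) with hx | hx
  · rw [integral_congr_off_countable {(-1/2 : ℝ)} (Set.countable_singleton _)
      (g := fun _ => (0:ℝ))]
    · simp [pos_of_nonpos (by linarith : x + 1 ≤ 0), pos_of_nonpos (by linarith : x ≤ 0),
        pos_of_nonpos (by linarith : x - 1 ≤ 0)]
    · intro t hmem hts
      rw [Set.uIoc_of_le (by linarith)] at hmem
      rw [B0_apply, if_neg]
      intro hIcc
      have h1 := hmem.2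
      have h2 := hIcc.1
      simp only [Set.mem_singleton_iff] at hts
      have : t = -1/2 := by linarith
      exact hts (by linarith)
  · rcases le_or_gt x 0 with hx0 | hx0
    · rw [← integral_add_adjacent_intervals (b := (-1/2 : ℝ)) (B0_ii _ _) (B0_ii _ _)]
      rw [integral_congr_off_countable {(-1/2 : ℝ)} (Set.countable_singleton _)
        (g := fun _ => (0:ℝ)) (a := x - 1/2) (b := (-1/2 : ℝ)),
        integral_congr_off_countable (∅ : Set ℝ) Set.countable_empty
        (g := fun _ => (1:ℝ)) (a := (-1/2 : ℝ)) (b := x + 1/2)]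
      · simp only [intervalIntegral.integral_zero, intervalIntegral.integral_const, smul_eq_mul, mul_one, zero_add]
        rw [pos_of_nonneg (by linarith : (0:ℝ) ≤ x + 1),
          pos_of_nonpos (by linarith : x ≤ 0), pos_of_nonpos (by linarith : x - 1 ≤ 0)]
        ring
      · intro t hmem _
        rw [Set.uIoc_of_le (by linarith)] at hmem
        rw [B0_apply, if_pos]
        constructor <;> [linarith [hmem.1]; linarith [hmem.2]]
      · intro t hmem hts
        rw [Set.uIoc_of_le (by linarith)] at hmem
        rw [B0_apply, if_neg]
        intro hIcc
        simp only [Set.mem_singleton_iff] at hts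
        have h1 := hmem.2
        have h2 := hIcc.1
        exact hts (by linarith)
    · rcases le_or_gt x 1 with hx1 | hx1
      · rw [← integral_add_adjacent_intervals (b := (1/2 : ℝ)) (B0_ii _ _) (B0_ii _ _)]
        rw [integral_congr_off_countable (∅ : Set ℝ) Set.countable_empty
          (g := fun _ => (1:ℝ)) (a := x - 1/2) (b := (1/2 : ℝ)),
          integral_congr_off_countable (∅ : Set ℝ) Set.countable_empty
          (g := fun _ => (0:ℝ)) (a := (1/2 : ℝ)) (b := x + 1/2)]
        · simp only [intervalIntegral.integral_zero, intervalIntegral.integral_const, smul_eq_mul, mul_one, add_zero]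
          rw [pos_of_nonneg (by linarith : (0:ℝ) ≤ x + 1),
            pos_of_nonneg (by linarith : (0:ℝ) ≤ x),
            pos_of_nonpos (by linarith : x - 1 ≤ 0)]
          ring
        · intro t hmem _
          rw [Set.uIoc_of_le (by linarith)] at hmem
          rw [B0_apply, if_neg]
          intro hIcc
          have := hIcc.2
          linarith [hmem.1]
        · intro t hmem _
          rw [Set.uIoc_of_le (by linarith)] at hmem
          rw [B0_apply, if_pos]
          constructor <;> [linarith [hmem.1]; linarith [hmem.2]]
      · rw [integral_congr_off_countable (∅ : Set ℝ) Set.countable_empty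
          (g := fun _ => (0:ℝ))]
        · rw [pos_of_nonneg (by linarith : (0:ℝ) ≤ x + 1),
            pos_of_nonneg (by linarith : (0:ℝ) ≤ x),
            pos_of_nonneg (by linarith : (0:ℝ) ≤ x - 1)]
          simp; ring
        · intro t hmem _
          rw [Set.uIoc_of_le (by linarith)] at hmem
          rw [B0_apply, if_neg]
          intro hIcc
          have := hIcc.2
          linarith [hmem.1]




lemma hasDerivAt_pos_sq (c x : ℝ) :
    HasDerivAt (fun t : ℝ => pos (t + c) ^ 2) (2 * pos (x + c)) x := by
  have h1 : HasDerivAt (fun t : ℝ => t + c) 1 (x := x) := (hasDerivAt_id x).add_const c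
  have h2 := (hasDerivAt_pos_pow 2 le_rfl (x + c)).comp x h1
  simpa [Function.comp_def] using h2

lemma hasDerivAt_pos_cube (c x : ℝ) :
    HasDerivAt (fun t : ℝ => pos (t + c) ^ 3) (3 * pos (x + c) ^ 2) x := by
  have h1 : HasDerivAt (fun t : ℝ => t + c) 1 (x := x) := (hasDerivAt_id x).add_const c
  have h2 := (hasDerivAt_pos_pow 3 (by norm_num) (x + c)).comp x h1
  simpa [Function.comp_def] using h2

lemma cont_pshift (c : ℝ) : Continuous (fun t : ℝ => pos (t + c)) :=
  continuous_pos_fun.comp (continuous_id.add continuous_const)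

lemma B2_eq (x : ℝ) : Bspline 2 x =
    (pos (x + 3/2) ^ 2 - 3 * pos (x + 1/2) ^ 2 + 3 * pos (x - 1/2) ^ 2 - pos (x - 3/2) ^ 2) / 2 := by
  have hdef : Bspline 2 x = ∫ t in (x - 1/2)..(x + 1/2), Bspline 1 t := rfl
  rw [hdef, intervalIntegral.integral_congr (g := fun t => pos (t + 1) - 2 * pos t + pos (t - 1))
    (fun t _ => B1_eq t)]
  have key : ∀ t ∈ Set.uIcc (x - 1/2) (x + 1/2),
      HasDerivAt (fun t => (pos (t + 1) ^ 2 - 2 * pos (t + 0) ^ 2 + pos (t + (-1)) ^ 2) / 2)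
        (pos (t + 1) - 2 * pos t + pos (t - 1)) t := by
    intro t _
    have h := (((hasDerivAt_pos_sq 1 t).sub ((hasDerivAt_pos_sq 0 t).const_mul 2)).add
      (hasDerivAt_pos_sq (-1) t)).div_const 2
    refine h.congr_deriv ?_
    · rw [show t + 0 = t from by ring, show t + (-1) = t - 1 from by ring]
      ring
  have hint : IntervalIntegrable (fun t => pos (t + 1) - 2 * pos t + pos (t - 1)) volume
      (x - 1/2) (x + 1/2) := by
    have : Continuous (fun t : ℝ => pos (t + 1) - 2 * pos t + pos (t - 1)) := by fun_prop
    exact this.intervalIntegrable _ _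
  rw [integral_eq_sub_of_hasDerivAt key hint]
  rw [show x + 1/2 + 1 = x + 3/2 from by ring, show x - 1/2 + 1 = x + 1/2 from by ring,
    show x + 1/2 + 0 = x + 1/2 from by ring, show x - 1/2 + 0 = x - 1/2 from by ring,
    show x + 1/2 + (-1) = x - 1/2 from by ring, show x - 1/2 + (-1) = x - 3/2 from by ring]
  ring

lemma B3_eq (x : ℝ) : Bspline 3 x =
    (pos (x + 2) ^ 3 - 4 * pos (x + 1) ^ 3 + 6 * pos x ^ 3 - 4 * pos (x - 1) ^ 3
      + pos (x - 2) ^ 3) / 6 := by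
  have hdef : Bspline 3 x = ∫ t in (x - 1/2)..(x + 1/2), Bspline 2 t := rfl
  rw [hdef, intervalIntegral.integral_congr
    (g := fun t => (pos (t + 3/2) ^ 2 - 3 * pos (t + 1/2) ^ 2 + 3 * pos (t - 1/2) ^ 2
      - pos (t - 3/2) ^ 2) / 2) (fun t _ => B2_eq t)]
  have key : ∀ t ∈ Set.uIcc (x - 1/2) (x + 1/2),
      HasDerivAt (fun t => (pos (t + 3/2) ^ 3 - 3 * pos (t + 1/2) ^ 3 + 3 * pos (t + (-1/2)) ^ 3
          - pos (t + (-3/2)) ^ 3) / 6)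
        ((pos (t + 3/2) ^ 2 - 3 * pos (t + 1/2) ^ 2 + 3 * pos (t - 1/2) ^ 2
          - pos (t - 3/2) ^ 2) / 2) t := by
    intro t _
    have h := ((((hasDerivAt_pos_cube (3/2) t).sub ((hasDerivAt_pos_cube (1/2) t).const_mul 3)).add
      ((hasDerivAt_pos_cube (-1/2) t).const_mul 3)).sub (hasDerivAt_pos_cube (-3/2) t)).div_const 6
    refine h.congr_deriv ?_
    rw [show t + (-1/2 : ℝ) = t - 1/2 from by ring, show t + (-3/2 : ℝ) = t - 3/2 from by ring]
    ring
  have hint : IntervalIntegrable (fun t => (pos (t + 3/2) ^ 2 - 3 * pos (t + 1/2) ^ 2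
      + 3 * pos (t - 1/2) ^ 2 - pos (t - 3/2) ^ 2) / 2) volume (x - 1/2) (x + 1/2) := by
    have : Continuous (fun t : ℝ => (pos (t + 3/2) ^ 2 - 3 * pos (t + 1/2) ^ 2
        + 3 * pos (t - 1/2) ^ 2 - pos (t - 3/2) ^ 2) / 2) := by fun_prop
    exact this.intervalIntegrable _ _
  rw [integral_eq_sub_of_hasDerivAt key hint]
  rw [show x + 1/2 + 3/2 = x + 2 from by ring, show x - 1/2 + 3/2 = x + 1 from by ring,
    show x + 1/2 + 1/2 = x + 1 from by ring, show x - 1/2 + 1/2 = x from by ring,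
    show x + 1/2 + (-1/2) = x from by ring, show x - 1/2 + (-1/2) = x - 1 from by ring,
    show x + 1/2 + (-3/2) = x - 1 from by ring, show x - 1/2 + (-3/2) = x - 2 from by ring]
  ring




lemma B3_zero_right {y : ℝ} (h : 2 ≤ y) : Bspline 3 y = 0 := by
  rw [B3_eq, pos_of_nonneg (by linarith : (0:ℝ) ≤ y + 2),
    pos_of_nonneg (by linarith : (0:ℝ) ≤ y + 1), pos_of_nonneg (by linarith : (0:ℝ) ≤ y),
    pos_of_nonneg (by linarith : (0:ℝ) ≤ y - 1), pos_of_nonneg (by linarith : (0:ℝ) ≤ y - 2)]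
  ring

lemma B3_zero_left {y : ℝ} (h : y ≤ -2) : Bspline 3 y = 0 := by
  rw [B3_eq, pos_of_nonpos (by linarith : y + 2 ≤ 0),
    pos_of_nonpos (by linarith : y + 1 ≤ 0), pos_of_nonpos (by linarith : y ≤ 0),
    pos_of_nonpos (by linarith : y - 1 ≤ 0), pos_of_nonpos (by linarith : y - 2 ≤ 0)]
  ring

lemma B3_at1 {y : ℝ} (h0 : 0 ≤ y) (h1 : y < 1) :
    Bspline 3 (y + 1) = (1 - y) ^ 3 / 6 := by
  rw [B3_eq, pos_of_nonneg (by linarith : (0:ℝ) ≤ y + 1 + 2),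
    pos_of_nonneg (by linarith : (0:ℝ) ≤ y + 1 + 1), pos_of_nonneg (by linarith : (0:ℝ) ≤ y + 1),
    pos_of_nonneg (by linarith : (0:ℝ) ≤ y + 1 - 1), pos_of_nonpos (by linarith : y + 1 - 2 ≤ 0)]
  ring

lemma B3_at0 {y : ℝ} (h0 : 0 ≤ y) (h1 : y < 1) :
    Bspline 3 y = ((y + 2) ^ 3 - 4 * (y + 1) ^ 3 + 6 * y ^ 3) / 6 := by
  rw [B3_eq, pos_of_nonneg (by linarith : (0:ℝ) ≤ y + 2),
    pos_of_nonneg (by linarith : (0:ℝ) ≤ y + 1), pos_of_nonneg h0,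
    pos_of_nonpos (by linarith : y - 1 ≤ 0), pos_of_nonpos (by linarith : y - 2 ≤ 0)]
  ring

lemma B3_atm1 {y : ℝ} (h0 : 0 ≤ y) (h1 : y < 1) :
    Bspline 3 (y - 1) = ((y + 1) ^ 3 - 4 * y ^ 3) / 6 := by
  rw [B3_eq, pos_of_nonneg (by linarith : (0:ℝ) ≤ y - 1 + 2),
    pos_of_nonneg (by linarith : (0:ℝ) ≤ y - 1 + 1), pos_of_nonpos (by linarith : y - 1 ≤ 0),
    pos_of_nonpos (by linarith : y - 1 - 1 ≤ 0), pos_of_nonpos (by linarith : y - 1 - 2 ≤ 0)]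
  ring

lemma B3_atm2 {y : ℝ} (h0 : 0 ≤ y) (h1 : y < 1) :
    Bspline 3 (y - 2) = y ^ 3 / 6 := by
  rw [B3_eq, pos_of_nonneg (by linarith : (0:ℝ) ≤ y - 2 + 2),
    pos_of_nonpos (by linarith : y - 2 + 1 ≤ 0), pos_of_nonpos (by linarith : y - 2 ≤ 0),
    pos_of_nonpos (by linarith : y - 2 - 1 ≤ 0), pos_of_nonpos (by linarith : y - 2 - 2 ≤ 0)]
  ring

/-- the quasi-interpolation scheme with cubic B-splines and coefficients
`(a₀, a₁) = (8/6, −1/6)` reproduces polynomials of degree at most three: for every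
polynomial `q` with `deg q ≤ 3` and every `x ∈ ℝ`,
`Σ_{k∈ℤ} ((8/6) q(k) − (1/6) q(k−1) − (1/6) q(k+1)) 𝓑₃(x − k) = q(x)`. -/
theorem cubic_spline_quasi_interpolation_reproduces_cubics
    (q : Polynomial ℝ) (hq : q.degree ≤ 3) (x : ℝ) :
    ∑' k : ℤ,
        (8 / 6 * q.eval (k : ℝ) - 1 / 6 * q.eval ((k : ℝ) - 1)
            - 1 / 6 * q.eval ((k : ℝ) + 1)) * Bspline 3 (x - (k : ℝ))
      = q.eval x := by
  set n : ℤ := ⌊x⌋ with hn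
  have hfl : (n : ℝ) ≤ x := Int.floor_le x
  have hfu : x < (n : ℝ) + 1 := Int.lt_floor_add_one x
  set f : ℤ → ℝ := fun k =>
    (8 / 6 * q.eval (k : ℝ) - 1 / 6 * q.eval ((k : ℝ) - 1)
      - 1 / 6 * q.eval ((k : ℝ) + 1)) * Bspline 3 (x - (k : ℝ)) with hf
  have hsupp : ∀ k ∉ ({n - 1, n, n + 1, n + 2} : Finset ℤ), f k = 0 := by
    intro k hk
    simp only [Finset.mem_insert, Finset.mem_singleton] at hk
    push_neg at hk
    have hcase : k ≤ n - 2 ∨ n + 3 ≤ k := by omega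
    have hz : Bspline 3 (x - (k : ℝ)) = 0 := by
      rcases hcase with h | h
      · apply B3_zero_right
        have : (k : ℝ) ≤ (n : ℝ) - 2 := by exact_mod_cast h
        linarith
      · apply B3_zero_left
        have : (n : ℝ) + 3 ≤ (k : ℝ) := by exact_mod_cast h
        linarith
    rw [hf]; simp [hz]
  rw [tsum_eq_sum hsupp]
  rw [Finset.sum_insert (by simp only [Finset.mem_insert, Finset.mem_singleton]; omega), Finset.sum_insert (by simp only [Finset.mem_insert, Finset.mem_singleton]; omega),
    Finset.sum_insert (by simp only [Finset.mem_insert, Finset.mem_singleton]; omega), Finset.sum_singleton]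
  have h0 : (0:ℝ) ≤ x - n := by linarith
  have h1 : x - n < 1 := by linarith
  have hb1 : Bspline 3 (x - ((n - 1 : ℤ) : ℝ)) = (1 - (x - n)) ^ 3 / 6 := by
    rw [show x - ((n - 1 : ℤ) : ℝ) = (x - n) + 1 by push_cast; ring]
    exact B3_at1 h0 h1
  have hb2 : Bspline 3 (x - ((n : ℤ) : ℝ))
      = (((x - n) + 2) ^ 3 - 4 * ((x - n) + 1) ^ 3 + 6 * (x - n) ^ 3) / 6 := B3_at0 h0 h1
  have hb3 : Bspline 3 (x - ((n + 1 : ℤ) : ℝ)) = (((x - n) + 1) ^ 3 - 4 * (x - n) ^ 3) / 6 := by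
    rw [show x - ((n + 1 : ℤ) : ℝ) = (x - n) - 1 by push_cast; ring]
    exact B3_atm1 h0 h1
  have hb4 : Bspline 3 (x - ((n + 2 : ℤ) : ℝ)) = (x - n) ^ 3 / 6 := by
    rw [show x - ((n + 2 : ℤ) : ℝ) = (x - n) - 2 by push_cast; ring]
    exact B3_atm2 h0 h1
  have hdeg : q.natDegree < 4 := by
    have : q.natDegree ≤ 3 := Polynomial.natDegree_le_iff_degree_le.2 (by exact_mod_cast hq)
    omega
  simp only [hf, hb1, hb2, hb3, hb4, Polynomial.eval_eq_sum_range' hdeg,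
    Finset.sum_range_succ, Finset.sum_range_zero]
  push_cast
  ring
end
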